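/- arXiv:1004.3655 — 11 statements merged into one kernel-verified Lean document; each statement's English description precedes it below -/
import Mathlib

section
/- Call a subset t ⊆ ℕ thin if the sequence (card(t ∩ {0,…,n−1})/n)_{n∈ℕ} converges to 0, and let 𝔗 be the set of all thin subsets of ℕ. Then every infinite subset a ⊆ ℕ contains an infinite thin subset (e.g. if (α_n) enumerates a in increasing order then {α_{n²} : n ∈ ℕ} is thin), and consequently 𝔗^⊥⊥ = 𝒫(ℕ), although 𝔗 ≠ 𝒫(ℕ). Hence 𝔗 is not a finiteness structure even though it contains all finite subsets of ℕ, is downward closed for inclusion, and is closed under finite unions. -/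
open Set Filter

namespace FinitenessPaper

/-- The predual of a set `F` of subsets of `A`:
all subsets of `A` whose intersection with every member of `F` is finite. -/
def predual {α : Type*} (A : Set α) (F : Set (Set α)) : Set (Set α) :=
  {a' | a' ⊆ A ∧ ∀ a ∈ F, (a ∩ a').Finite}

/-- A subset `t ⊆ ℕ` is thin if `card (t ∩ {0,…,n-1}) / n` tends to `0`. -/
def Thin (t : Set ℕ) : Prop :=
  Tendsto (fun n : ℕ => ((t ∩ Set.Iio n).ncard : ℝ) / n) atTop (nhds 0)

lemma ratio_nonneg (t : Set ℕ) (n : ℕ) : 0 ≤ ((t ∩ Set.Iio n).ncard : ℝ) / n := by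
  positivity

lemma ncard_Iio (n : ℕ) : (Set.Iio n).ncard = n := by
  rw [← Finset.coe_Iio, Set.ncard_coe_finset, Nat.card_Iio]

lemma ncard_Iic (n : ℕ) : (Set.Iic n).ncard = n + 1 := by
  rw [← Finset.coe_Iic, Set.ncard_coe_finset, Nat.card_Iic]

lemma thin_of_finite (t : Set ℕ) (ht : t.Finite) : Thin t := by
  have h : ∀ n : ℕ, ((t ∩ Set.Iio n).ncard : ℝ) / n ≤ (t.ncard : ℝ) / n := by
    intro n
    have h1 : ((t ∩ Set.Iio n).ncard : ℝ) ≤ (t.ncard : ℝ) := by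
      exact_mod_cast Set.ncard_le_ncard Set.inter_subset_left ht
    gcongr
  exact squeeze_zero (ratio_nonneg t) h (tendsto_const_div_atTop_nhds_zero_nat _)

lemma thin_subset (t t' : Set ℕ) (h : t' ⊆ t) (ht : Thin t) : Thin t' := by
  refine squeeze_zero (ratio_nonneg t') (fun n => ?_) ht
  have h1 : ((t' ∩ Set.Iio n).ncard : ℝ) ≤ ((t ∩ Set.Iio n).ncard : ℝ) := by
    exact_mod_cast Set.ncard_le_ncard (Set.inter_subset_inter_left _ h) ((Set.finite_Iio n).inter_of_right t)
  gcongr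

lemma thin_union (t t' : Set ℕ) (ht : Thin t) (ht' : Thin t') : Thin (t ∪ t') := by
  have := ht.add ht'
  rw [add_zero] at this
  refine squeeze_zero (ratio_nonneg _) (fun n => ?_) this
  rw [← add_div]
  gcongr
  rw [Set.union_inter_distrib_right]
  exact_mod_cast Set.ncard_union_le _ _

lemma not_thin_univ : ¬ Thin (Set.univ : Set ℕ) := by
  intro h
  have h1 : Tendsto (fun n : ℕ => (((Set.univ : Set ℕ) ∩ Set.Iio n).ncard : ℝ) / n)
      atTop (nhds 1) := by
    apply Tendsto.congr' _ tendsto_const_nhds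
    filter_upwards [eventually_ge_atTop 1] with n hn
    rw [Set.univ_inter, ncard_Iio, div_self]
    exact_mod_cast Nat.one_le_iff_ne_zero.mp hn
  exact one_ne_zero (tendsto_nhds_unique h1 h)

lemma sqrt_cast_atTop : Tendsto (fun n : ℕ => ((Nat.sqrt n : ℕ) : ℝ)) atTop atTop := by
  apply tendsto_natCast_atTop_atTop.comp
  refine tendsto_atTop_atTop.2 fun b => ⟨b * b, fun n hn => Nat.le_sqrt.2 hn⟩

lemma exists_thin (a : Set ℕ) (ha : a.Infinite) :
    ∃ t : Set ℕ, t ⊆ a ∧ t.Infinite ∧ Thin t := by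
  have ha' : (setOf (· ∈ a)).Infinite := ha
  set g : ℕ → ℕ := fun j => Nat.nth (· ∈ a) (j * j) with hg
  have hmono : StrictMono g := by
    intro i j hij
    exact (Nat.nth_lt_nth ha').2 (Nat.mul_self_lt_mul_self hij)
  have hle : ∀ j, j * j ≤ g j := fun j =>
    Nat.le_nth (fun hf => absurd hf ha')
  refine ⟨Set.range g, ?_, ?_, ?_⟩
  · rintro x ⟨j, rfl⟩
    exact Nat.nth_mem_of_infinite ha' _
  · exact Set.infinite_range_of_injective hmono.injective
  · -- Thin
    have hb : ∀ n : ℕ, (Set.range g ∩ Set.Iio n).ncard ≤ Nat.sqrt n + 1 := by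
      intro n
      have hsub : Set.range g ∩ Set.Iio n ⊆ g '' Set.Iic (Nat.sqrt n) := by
        rintro x ⟨⟨j, rfl⟩, hx⟩
        refine ⟨j, ?_, rfl⟩
        exact Nat.le_sqrt.2 (le_of_lt (lt_of_le_of_lt (hle j) hx))
      calc (Set.range g ∩ Set.Iio n).ncard ≤ (g '' Set.Iic (Nat.sqrt n)).ncard :=
            Set.ncard_le_ncard hsub ((Set.finite_Iic _).image g)
        _ ≤ (Set.Iic (Nat.sqrt n)).ncard := Set.ncard_image_le (Set.finite_Iic _)
        _ = Nat.sqrt n + 1 := ncard_Iic _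
    have hlim : Tendsto (fun n : ℕ => 2 / ((Nat.sqrt n : ℕ) : ℝ)) atTop (nhds 0) :=
      tendsto_const_nhds.div_atTop sqrt_cast_atTop
    refine squeeze_zero' (Eventually.of_forall (ratio_nonneg _)) ?_ hlim
    filter_upwards [eventually_ge_atTop 1] with n hn
    have hs1 : 1 ≤ Nat.sqrt n := Nat.le_sqrt.2 (by simpa using hn)
    have hs1' : (1 : ℝ) ≤ (Nat.sqrt n : ℝ) := by exact_mod_cast hs1
    have hnn : ((Nat.sqrt n : ℕ) : ℝ) * (Nat.sqrt n : ℝ) ≤ (n : ℝ) := by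
      have h := Nat.sqrt_le n
      exact_mod_cast h
    have hpos : (0 : ℝ) < (Nat.sqrt n : ℝ) := lt_of_lt_of_le one_pos hs1'
    have hnpos : (0 : ℝ) < (n : ℝ) := by positivity
    calc ((Set.range g ∩ Set.Iio n).ncard : ℝ) / n
        ≤ ((Nat.sqrt n : ℝ) + 1) / n := by
          gcongr
          exact_mod_cast hb n
      _ ≤ (2 * (Nat.sqrt n : ℝ)) / ((Nat.sqrt n : ℝ) * (Nat.sqrt n : ℝ)) := by
          apply div_le_div₀ (by positivity) (by linarith) (by positivity) hnn
      _ = 2 / ((Nat.sqrt n : ℕ) : ℝ) := by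
          field_simp
  
/-- The set 𝔗 of thin subsets of ℕ is a "fake" finiteness structure: every infinite
subset of ℕ contains an infinite thin subset, hence 𝔗^⊥⊥ = 𝒫(ℕ) while 𝔗 ≠ 𝒫(ℕ);
so 𝔗 is not a finiteness structure, even though it contains all finite sets, is
downward closed for inclusion and closed under finite unions. -/
theorem thin_fake_finiteness_structure :
    (∀ a : Set ℕ, a.Infinite → ∃ t : Set ℕ, t ⊆ a ∧ t.Infinite ∧ Thin t) ∧
    predual Set.univ (predual Set.univ {t : Set ℕ | Thin t}) = Set.univ ∧
    {t : Set ℕ | Thin t} ≠ Set.univ ∧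
    predual Set.univ (predual Set.univ {t : Set ℕ | Thin t}) ≠ {t : Set ℕ | Thin t} ∧
    (∀ t : Set ℕ, t.Finite → Thin t) ∧
    (∀ t t' : Set ℕ, t' ⊆ t → Thin t → Thin t') ∧
    (∀ t t' : Set ℕ, Thin t → Thin t' → Thin (t ∪ t')) := by
  have hpred : ∀ a' ∈ predual Set.univ {t : Set ℕ | Thin t}, a'.Finite := by
    intro a' ⟨_, h⟩
    by_contra hinf
    obtain ⟨t, hts, hti, htt⟩ := exists_thin a' hinf
    exact hti ((h t htt).subset (Set.subset_inter (Set.Subset.refl t) hts))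
  have hbidual : predual Set.univ (predual Set.univ {t : Set ℕ | Thin t}) = Set.univ := by
    ext a
    simp only [Set.mem_univ, iff_true, predual, Set.mem_setOf_eq]
    exact ⟨Set.subset_univ a, fun a' ha' => ((hpred a' ha').inter_of_left a)⟩
  refine ⟨exists_thin, hbidual, ?_, ?_, thin_of_finite, thin_subset, thin_union⟩
  · intro h
    exact not_thin_univ (Set.eq_univ_iff_forall.mp h Set.univ)
  · rw [hbidual]
    intro h
    exact not_thin_univ (Set.eq_univ_iff_forall.mp h.symm Set.univ)


end FinitenessPaper
end

section
/- For each n ∈ ℕ let †_n = {(p,q) ∈ ℕ×ℕ : p = n or q = n}, and let 𝔠_n be the predual on ℕ×ℕ of {†_p : p ≥ n}. Then the sequence (𝔠_n) is increasing for inclusion, and its union 𝔠 = ⋃_{n∈ℕ} 𝔠_n satisfies 𝔠^⊥ = {finite subsets of ℕ×ℕ}, hence 𝔠^⊥⊥ = 𝒫(ℕ×ℕ), while 𝔠 ≠ 𝒫(ℕ×ℕ). In particular 𝔠 is an increasing union of finiteness structures which is not a finiteness structure. -/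
open Set

namespace FinitenessPaper

/-- `†_n = {(p,q) : p = n ∨ q = n}`. -/
def dagger (n : ℕ) : Set (ℕ × ℕ) := {p | p.1 = n ∨ p.2 = n}

/-- `𝔠_n` is the predual (on ℕ×ℕ) of `{†_p : p ≥ n}`. -/
def cfrak (n : ℕ) : Set (Set (ℕ × ℕ)) :=
  predual Set.univ {d | ∃ p, n ≤ p ∧ d = dagger p}

lemma predual_anti {α : Type*} {F G : Set (Set α)} (h : F ⊆ G) :
    predual Set.univ G ⊆ predual Set.univ F :=
  fun _ ⟨h1, h2⟩ => ⟨h1, fun a ha => h2 a (h ha)⟩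

lemma subset_predual_predual {α : Type*} (F : Set (Set α)) :
    F ⊆ predual Set.univ (predual Set.univ F) := by
  intro a ha
  exact ⟨subset_univ _, fun b hb => (Set.inter_comm a b ▸ hb.2 a ha)⟩

lemma predual_triple {α : Type*} (F : Set (Set α)) :
    predual Set.univ (predual Set.univ (predual Set.univ F)) = predual Set.univ F :=
  Set.Subset.antisymm (predual_anti (subset_predual_predual F))
    (subset_predual_predual (predual Set.univ F))

lemma dagger_infinite (n : ℕ) : (dagger n).Infinite := by
  apply Set.infinite_of_injective_forall_mem (f := fun q : ℕ => (n, q))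
    (fun a b hab => by simpa using congrArg Prod.snd hab)
  intro q; exact Or.inl rfl

lemma dagger_inter_finite {p q : ℕ} (h : p ≠ q) : (dagger p ∩ dagger q).Finite := by
  apply Set.Finite.subset (Set.toFinite {(p, q), (q, p)})
  rintro ⟨x, y⟩ ⟨hx, hy⟩
  simp only [dagger, mem_setOf_eq] at hx hy
  simp only [mem_insert_iff, mem_singleton_iff, Prod.mk.injEq]
  rcases hx with hx | hx <;> rcases hy with hy | hy <;> omega

lemma dagger_mem_cfrak (p : ℕ) : dagger p ∈ cfrak (p + 1) := by
  refine ⟨subset_univ _, ?_⟩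
  rintro d ⟨q, hq, rfl⟩
  exact dagger_inter_finite (by omega)

lemma predual_union_eq :
    predual Set.univ (⋃ n, cfrak n) = {c : Set (ℕ × ℕ) | c.Finite} := by
  ext c
  constructor
  · rintro ⟨-, h⟩
    by_contra hfin
    have hc : c.Infinite := hfin
    by_cases hall : ∀ p, (dagger p ∩ c).Finite
    · have hmem : c ∈ ⋃ n, cfrak n := by
        refine mem_iUnion.2 ⟨0, subset_univ _, ?_⟩
        rintro d ⟨p, -, rfl⟩
        exact hall p
      have := h c hmem
      rw [Set.inter_self] at this
      exact hc this
    · push_neg at hall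
      obtain ⟨p, hp⟩ := hall
      exact hp (h (dagger p) (mem_iUnion.2 ⟨p + 1, dagger_mem_cfrak p⟩))
  · intro hc
    exact ⟨subset_univ _, fun a _ => hc.inter_of_right a⟩

/-- The sequence `(𝔠_n)` is increasing, each `𝔠_n` is a finiteness structure,
but the union `𝔠 = ⋃ₙ 𝔠ₙ` has `𝔠^⊥` the finite sets, hence `𝔠^⊥⊥ = 𝒫(ℕ×ℕ) ≠ 𝔠`:
an increasing union of finiteness structures need not be a finiteness structure. -/
theorem cfrak_increasing_union_not_finiteness_structure :
    (∀ m n : ℕ, m ≤ n → cfrak m ⊆ cfrak n) ∧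
    (∀ n : ℕ, predual Set.univ (predual Set.univ (cfrak n)) = cfrak n) ∧
    predual Set.univ (⋃ n, cfrak n) = {c : Set (ℕ × ℕ) | c.Finite} ∧
    predual Set.univ (predual Set.univ (⋃ n, cfrak n)) = Set.univ ∧
    (⋃ n, cfrak n) ≠ Set.univ := by
  refine ⟨?_, ?_, predual_union_eq, ?_, ?_⟩
  · rintro m n hmn a ⟨h1, h2⟩
    exact ⟨h1, fun d ⟨p, hp, hd⟩ => h2 d ⟨p, hmn.trans hp, hd⟩⟩
  · intro n
    exact predual_triple _
  · rw [predual_union_eq]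
    refine eq_univ_of_forall fun a => ⟨subset_univ _, fun c hc => hc.inter_of_left a⟩
  · intro heq
    have huniv : (Set.univ : Set (ℕ × ℕ)) ∈ ⋃ n, cfrak n := heq ▸ mem_univ _
    obtain ⟨n, -, h2⟩ := mem_iUnion.1 huniv
    have := h2 (dagger n) ⟨n, le_refl n, rfl⟩
    rw [Set.inter_univ] at this
    exact dagger_infinite n this

end FinitenessPaper
end

section
/- Let A be a set, (ℬ_i)_{i∈I} a family of finiteness spaces, and (f_i)_{i∈I} a family of relations f_i ⊆ A × |ℬ_i| such that f_i[{α}] ∈ F(ℬ_i) for all α ∈ A and all i ∈ I. Then 𝔗((ℬ_i),(f_i)) := {a ⊆ A : ∀ i ∈ I, f_i[a] ∈ F(ℬ_i)} is a finiteness structure on A, and moreover 𝔗((ℬ_i),(f_i)) = ({⋂_{i∈I}(f_i ÷ b_i) : ∀i, b_i ∈ F(ℬ_i)})^⊥⊥. -/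
open Set

namespace FinitenessPaper

/-- A finiteness space: a web together with a finiteness structure on it. -/
structure FinSpace (α : Type*) where
  web : Set α
  fin : Set (Set α)
  isFin : predual web (predual web fin) = fin

/-- Direct image of a set under a relation. -/
def rimage {α β : Type*} (f : Set (α × β)) (a : Set α) : Set β := {y | ∃ x ∈ a, (x, y) ∈ f}

lemma predual_antitone {α : Type*} (A : Set α) {F G : Set (Set α)} (h : F ⊆ G) :
    predual A G ⊆ predual A F := fun _ ha' => ⟨ha'.1, fun a ha => ha'.2 a (h ha)⟩

lemma subset_bipredual {α : Type*} (A : Set α) {F : Set (Set α)} (h : ∀ s ∈ F, s ⊆ A) :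
    F ⊆ predual A (predual A F) := fun a ha =>
  ⟨h a ha, fun a' ha' => by rw [inter_comm]; exact ha'.2 a ha⟩

lemma tripredual {α : Type*} (A : Set α) {F : Set (Set α)} (h : ∀ s ∈ F, s ⊆ A) :
    predual A (predual A (predual A F)) = predual A F :=
  Subset.antisymm (predual_antitone A (subset_bipredual A h))
    (subset_bipredual A (fun _ hs => hs.1))

/-- Transport lemma, family version: if each `f i ⊆ A × |ℬᵢ|` maps every element
of `A` to a finitary subset of `ℬᵢ`, then `{a ⊆ A : ∀ i, fᵢ[a] ∈ F(ℬᵢ)}` is a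
finiteness structure on `A`, equal to the bidual of the set of divisions
`⋂ᵢ (fᵢ ÷ bᵢ)` (relative to `A`) for families `bᵢ ∈ F(ℬᵢ)`. -/
theorem transport_family {α β : Type*} {I : Type*} (A : Set α)
    (B : I → FinSpace β) (f : I → Set (α × β))
    (hf_sub : ∀ i, f i ⊆ A ×ˢ (B i).web)
    (hf : ∀ x ∈ A, ∀ i, rimage (f i) {x} ∈ (B i).fin) :
    predual A (predual A {a | a ⊆ A ∧ ∀ i, rimage (f i) a ∈ (B i).fin})
        = {a | a ⊆ A ∧ ∀ i, rimage (f i) a ∈ (B i).fin} ∧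
    {a | a ⊆ A ∧ ∀ i, rimage (f i) a ∈ (B i).fin}
        = predual A (predual A
            {d | ∃ b : I → Set β, (∀ i, b i ∈ (B i).fin) ∧
              d = {x ∈ A | ∀ i, ∀ y, (x, y) ∈ f i → y ∈ b i}}) := by
  classical
  set 𝔇 : Set (Set α) := {d | ∃ b : I → Set β, (∀ i, b i ∈ (B i).fin) ∧
      d = {x ∈ A | ∀ i, ∀ y, (x, y) ∈ f i → y ∈ b i}} with h𝔇
  have key : {a | a ⊆ A ∧ ∀ i, rimage (f i) a ∈ (B i).fin}
      = predual A (predual A 𝔇) := by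
    apply Subset.antisymm
    · rintro a ⟨haA, hafin⟩
      refine ⟨haA, fun a' ha' => ?_⟩
      have hd : {x ∈ A | ∀ i, ∀ y, (x, y) ∈ f i → y ∈ rimage (f i) a} ∈ 𝔇 :=
        ⟨fun i => rimage (f i) a, hafin, rfl⟩
      refine (ha'.2 _ hd).subset ?_
      rintro x ⟨hx', hx⟩
      exact ⟨⟨haA hx, fun i y hy => ⟨x, hx, hy⟩⟩, hx'⟩
    · rintro a ⟨haA, hbid⟩
      refine ⟨haA, fun i => ?_⟩
      rw [← (B i).isFin]
      refine ⟨fun y hy => ?_, fun b' hb' => ?_⟩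
      · obtain ⟨x, hx, hxy⟩ := hy
        exact (hf_sub i hxy).2
      · by_contra hTfin
        have hT : (b' ∩ rimage (f i) a).Infinite := hTfin
        set T := b' ∩ rimage (f i) a with hTdef
        have hex : ∀ y ∈ T, ∃ x, x ∈ a ∧ (x, y) ∈ f i := fun y hy => hy.2
        obtain ⟨y0, hy0⟩ := hT.nonempty
        obtain ⟨x0, hx0⟩ := hex y0 hy0
        set w : β → α := fun y =>
          if h : ∃ x, x ∈ a ∧ (x, y) ∈ f i then h.choose else x0 with hw
        have hwspec : ∀ y ∈ T, w y ∈ a ∧ (w y, y) ∈ f i := by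
          intro y hy
          have h := hex y hy
          simp only [hw, dif_pos h]
          exact h.choose_spec
        set a' := w '' T with ha'def
        have ha'a : a' ⊆ a := by
          rintro x ⟨y, hy, rfl⟩; exact (hwspec y hy).1
        have hfiber : ∀ x ∈ a', {y ∈ T | w y = x}.Finite := by
          intro x hx
          have h1 : (rimage (f i) {x} ∩ b').Finite :=
            hb'.2 _ (hf x (haA (ha'a hx)) i)
          refine h1.subset ?_
          rintro y ⟨hyT, hyw⟩
          exact ⟨⟨x, rfl, hyw ▸ (hwspec y hyT).2⟩, hyT.1⟩
        have ha'inf : a'.Infinite := by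
          intro hfin
          apply hT
          have hsub : T ⊆ ⋃ x ∈ a', {y ∈ T | w y = x} := fun y hy =>
            mem_biUnion (mem_image_of_mem w hy) ⟨hy, rfl⟩
          exact ((hfin.biUnion hfiber).subset hsub)
        have ha'pre : a' ∈ predual A 𝔇 := by
          refine ⟨fun x hx => haA (ha'a hx), ?_⟩
          rintro d ⟨b, hb, rfl⟩
          have hfin1 : ({y ∈ T | y ∈ b i ∩ b'}).Finite :=
            (hb'.2 _ (hb i)).subset (fun y hy => hy.2)
          refine (hfin1.image w).subset ?_
          rintro x ⟨hxd, y, hyT, rfl⟩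
          exact ⟨y, ⟨hyT, hxd.2 i y (hwspec y hyT).2, hyT.1⟩, rfl⟩
        exact ha'inf ((hbid a' ha'pre).subset (subset_inter Subset.rfl ha'a))
  refine ⟨?_, key⟩
  rw [key]
  exact tripredual A (fun s hs => hs.1)

end FinitenessPaper
end

section
/- Let 𝒜 and ℬ be finiteness spaces and f ⊆ |𝒜| × |ℬ| a relation. The following are equivalent: (a) f is finitary from 𝒜 to ℬ; (b) the reverse relation f⁻¹ is finitary from ℬ^⊥ to 𝒜^⊥; (c) for all a ∈ F(𝒜), f[a] ∈ F(ℬ), and for all β ∈ |ℬ|, f⁻¹[{β}] ∈ F(𝒜^⊥); (d) f ∈ F(𝒜 ⊸ ℬ). -/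
open Set

namespace FinitenessPaper

/-- Reverse relation. -/
def rrev {α β : Type*} (f : Set (α × β)) : Set (β × α) := {p | (p.2, p.1) ∈ f}

/-- A relation is finitary between two (webs with) finiteness structures:
direct images of finitary sets are finitary, and reverse images of antifinitary
sets are antifinitary. -/
def FinitaryRel {α β : Type*} (Aw : Set α) (AF : Set (Set α)) (Bw : Set β)
    (BF : Set (Set β)) (f : Set (α × β)) : Prop :=
  (∀ a ∈ AF, rimage f a ∈ BF) ∧
  ∀ b' ∈ predual Bw BF, rimage (rrev f) b' ∈ predual Aw AF

/-- The finiteness structure of the tensor product `𝒜 ⊗ ℬ` (given by webs and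
structures): subsets of the product web whose two projections are finitary. -/
def tensFin {α β : Type*} (Wa : Set α) (Fa : Set (Set α)) (Wb : Set β)
    (Fb : Set (Set β)) : Set (Set (α × β)) :=
  {c | c ⊆ Wa ×ˢ Wb ∧ Prod.fst '' c ∈ Fa ∧ Prod.snd '' c ∈ Fb}

lemma predual_down {α : Type*} {W : Set α} {F : Set (Set α)} {a a' : Set α}
    (h : a ∈ predual W F) (hs : a' ⊆ a) : a' ∈ predual W F :=
  ⟨hs.trans h.1, fun b hb => (h.2 b hb).subset (inter_subset_inter_right _ hs)⟩

lemma singleton_mem_predual {α : Type*} {W : Set α} {F : Set (Set α)} {x : α}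
    (hx : x ∈ W) : ({x} : Set α) ∈ predual W F :=
  ⟨singleton_subset_iff.2 hx, fun a _ => (finite_singleton x).inter_of_right a⟩

lemma fin_subset_web {α : Type*} (A : FinSpace α) {a : Set α} (ha : a ∈ A.fin) :
    a ⊆ A.web := by
  rw [← A.isFin] at ha; exact ha.1

lemma fin_inter {α : Type*} (A : FinSpace α) {a a' : Set α} (ha : a ∈ A.fin)
    (ha' : a' ∈ predual A.web A.fin) : (a ∩ a').Finite := ha'.2 a ha

lemma mem_fin {α : Type*} (A : FinSpace α) {a : Set α} (h1 : a ⊆ A.web)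
    (h2 : ∀ a' ∈ predual A.web A.fin, (a' ∩ a).Finite) : a ∈ A.fin := by
  rw [← A.isFin]; exact ⟨h1, h2⟩

lemma fin_down {α : Type*} (A : FinSpace α) {a a' : Set α} (ha : a ∈ A.fin)
    (hs : a' ⊆ a) : a' ∈ A.fin := by
  rw [← A.isFin] at ha ⊢; exact predual_down ha hs

/-- Characterization of finitary relations: `f` is finitary from `𝒜` to `ℬ` iff
`f⁻¹` is finitary from `ℬ^⊥` to `𝒜^⊥`, iff direct images of finitary sets are
finitary and `f⁻¹[{β}]` is antifinitary for every `β ∈ |ℬ|`, iff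
`f ∈ F(𝒜 ⊸ ℬ) = F((𝒜 ⊗ ℬ^⊥)^⊥)`. -/
theorem finitaryRel_characterization {α β : Type*} (A : FinSpace α) (B : FinSpace β)
    (f : Set (α × β)) (hf : f ⊆ A.web ×ˢ B.web) :
    (FinitaryRel A.web A.fin B.web B.fin f ↔
      FinitaryRel B.web (predual B.web B.fin) A.web (predual A.web A.fin) (rrev f)) ∧
    (FinitaryRel A.web A.fin B.web B.fin f ↔
      ((∀ a ∈ A.fin, rimage f a ∈ B.fin) ∧
        ∀ b ∈ B.web, rimage (rrev f) {b} ∈ predual A.web A.fin)) ∧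
    (FinitaryRel A.web A.fin B.web B.fin f ↔
      f ∈ predual (A.web ×ˢ B.web)
        (tensFin A.web A.fin B.web (predual B.web B.fin))) := by
  -- (a) → (d)
  have had : FinitaryRel A.web A.fin B.web B.fin f →
      f ∈ predual (A.web ×ˢ B.web)
        (tensFin A.web A.fin B.web (predual B.web B.fin)) := by
    rintro ⟨h1, h2⟩
    refine ⟨hf, fun c hc => ?_⟩
    obtain ⟨hcw, hc1, hc2⟩ := hc
    have hfin1 : ((Prod.fst '' c) ∩ rimage (rrev f) (Prod.snd '' c)).Finite :=
      fin_inter A hc1 (h2 _ hc2)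
    have hfin2 : ((rimage f (Prod.fst '' c)) ∩ (Prod.snd '' c)).Finite :=
      hc2.2 _ (h1 _ hc1)
    refine (hfin1.prod hfin2).subset ?_
    rintro ⟨x, y⟩ ⟨hxc, hxf⟩
    refine ⟨⟨⟨(x, y), hxc, rfl⟩, ⟨y, ⟨(x, y), hxc, rfl⟩, hxf⟩⟩,
      ⟨⟨x, ⟨(x, y), hxc, rfl⟩, hxf⟩, ⟨(x, y), hxc, rfl⟩⟩⟩
  -- (d) → (c)
  have hdc : f ∈ predual (A.web ×ˢ B.web)
        (tensFin A.web A.fin B.web (predual B.web B.fin)) →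
      ((∀ a ∈ A.fin, rimage f a ∈ B.fin) ∧
        ∀ b ∈ B.web, rimage (rrev f) {b} ∈ predual A.web A.fin) := by
    rintro ⟨hfw, hall⟩
    constructor
    · intro a ha
      refine mem_fin B (fun y hy => ?_) (fun b' hb' => ?_)
      · obtain ⟨x, _, hxy⟩ := hy
        exact (hf hxy).2
      · set c : Set (α × β) := (a ×ˢ b') ∩ f with hc
        have hcmem : c ∈ tensFin A.web A.fin B.web (predual B.web B.fin) := by
          refine ⟨fun p hp => hf hp.2, ?_, ?_⟩
          · exact fin_down A ha (by rintro x ⟨⟨u, v⟩, hp, rfl⟩; exact hp.1.1)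
          · exact predual_down hb' (by rintro y ⟨⟨u, v⟩, hp, rfl⟩; exact hp.1.2)
        have hcf : (c ∩ f).Finite := hall c hcmem
        have hcfin : c.Finite := hcf.subset (fun p hp => ⟨hp, hp.2⟩)
        refine (hcfin.image Prod.snd).subset ?_
        rintro y ⟨hyb, x, hxa, hxy⟩
        exact ⟨(x, y), ⟨⟨hxa, hyb⟩, hxy⟩, rfl⟩
    · intro b hb
      refine ⟨fun x hx => ?_, fun a ha => ?_⟩
      · obtain ⟨y, _, hxy⟩ := hx
        exact (hf hxy).1
      · set c : Set (α × β) := (a ×ˢ ({b} : Set β)) ∩ f with hc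
        have hcmem : c ∈ tensFin A.web A.fin B.web (predual B.web B.fin) := by
          refine ⟨fun p hp => hf hp.2, ?_, ?_⟩
          · exact fin_down A ha (by rintro x ⟨⟨u, v⟩, hp, rfl⟩; exact hp.1.1)
          · exact predual_down (singleton_mem_predual hb)
              (by rintro y ⟨⟨u, v⟩, hp, rfl⟩; exact hp.1.2)
        have hcf : (c ∩ f).Finite := hall c hcmem
        have hcfin : c.Finite := hcf.subset (fun p hp => ⟨hp, hp.2⟩)
        refine (hcfin.image Prod.fst).subset ?_
        rintro x ⟨hxa, y, hyb, hxy⟩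
        exact ⟨(x, y), ⟨⟨hxa, hyb⟩, hxy⟩, rfl⟩
  -- (c) → (a)
  have hca : ((∀ a ∈ A.fin, rimage f a ∈ B.fin) ∧
        ∀ b ∈ B.web, rimage (rrev f) {b} ∈ predual A.web A.fin) →
      FinitaryRel A.web A.fin B.web B.fin f := by
    rintro ⟨h1, h2⟩
    refine ⟨h1, fun b' hb' => ⟨fun x hx => ?_, fun a ha => ?_⟩⟩
    · obtain ⟨y, _, hxy⟩ := hx
      exact (hf hxy).1
    · have hfb : (rimage f a ∩ b').Finite := fin_inter B (h1 a ha) hb'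
      have hsub : a ∩ rimage (rrev f) b' ⊆
          ⋃ y ∈ rimage f a ∩ b', a ∩ rimage (rrev f) {y} := by
        rintro x ⟨hxa, y, hyb, hxy⟩
        exact mem_biUnion ⟨⟨x, hxa, hxy⟩, hyb⟩ ⟨hxa, y, rfl, hxy⟩
      refine (Set.Finite.biUnion hfb (fun y hy => ?_)).subset hsub
      exact fin_inter A ha (h2 y (hb'.1 hy.2))
  refine ⟨?_, ⟨fun h => hdc (had h), hca⟩, ⟨had, fun h => hca (hdc h)⟩⟩
  -- (a) ↔ (b)
  unfold FinitaryRel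
  rw [A.isFin, B.isFin]
  exact and_comm
end FinitenessPaper
end

section
/- For every finiteness space 𝒜 with |𝒜| ≠ ∅, the support relation supp ⊆ M(|𝒜|) × |𝒜| (relating each finite multiset to the elements of its support) is not finitary from !𝒜 to 𝒜. -/
open Set

namespace FinitenessPaper

/-- `M(a)`: the set of finite multisets all of whose elements lie in `a`. -/
def bangSet {α : Type*} (a : Set α) : Set (Multiset α) := {μ | ∀ x ∈ μ, x ∈ a}

/-- The support relation from `M(|𝒜|)` to `|𝒜|` is never finitary from `!𝒜` to
`𝒜` when the web of `𝒜` is nonempty. -/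
theorem supp_not_finitary {α : Type*} (A : FinSpace α) (hA : A.web.Nonempty) :
    ¬ FinitaryRel (bangSet A.web)
        {s | s ⊆ bangSet A.web ∧ (⋃ μ ∈ s, {x : α | x ∈ μ}) ∈ A.fin}
        A.web A.fin
        {p : Multiset α × α | (∀ x ∈ p.1, x ∈ A.web) ∧ p.2 ∈ p.1} := by
  rintro ⟨-, h2⟩
  obtain ⟨x, hx⟩ := hA
  -- {x} is in the predual of fin
  have hxfin : ({x} : Set α) ∈ predual A.web A.fin := by
    refine ⟨by simpa using hx, fun a _ => (Set.finite_singleton x).subset inter_subset_right⟩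
  have h := h2 {x} hxfin
  -- the set of multiples of x
  set a : Set (Multiset α) := Set.range (fun n : ℕ => Multiset.replicate (n + 1) x) with ha
  have hxfin' : ({x} : Set α) ∈ A.fin := by
    rw [← A.isFin]
    exact ⟨by simpa using hx, fun s _ => (Set.finite_singleton x).subset inter_subset_right⟩
  have haAF : a ∈ {s | s ⊆ bangSet A.web ∧ (⋃ μ ∈ s, {x : α | x ∈ μ}) ∈ A.fin} := by
    constructor
    · rintro μ ⟨n, rfl⟩ y hy
      rw [Multiset.eq_of_mem_replicate hy]; exact hx
    · have : (⋃ μ ∈ a, {x : α | x ∈ μ}) = {x} := by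
        ext y
        simp only [ha, mem_iUnion, mem_range, exists_prop, mem_setOf_eq, mem_singleton_iff]
        constructor
        · rintro ⟨μ, ⟨n, rfl⟩, hy⟩
          exact Multiset.eq_of_mem_replicate hy
        · rintro rfl
          exact ⟨Multiset.replicate 1 _, ⟨0, rfl⟩, by simp⟩
      rw [this]; exact hxfin'
  have hfin := h.2 a haAF
  have hsub : a ⊆ rimage (rrev {p : Multiset α × α | (∀ x ∈ p.1, x ∈ A.web) ∧ p.2 ∈ p.1}) {x} := by
    rintro μ ⟨n, rfl⟩
    refine ⟨x, rfl, ?_⟩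
    constructor
    · intro y hy; rw [Multiset.eq_of_mem_replicate hy]; exact hx
    · simp [Multiset.mem_replicate]
  have : a.Finite := hfin.subset (by
    rw [Set.inter_eq_left.mpr hsub])
  have hinj : Function.Injective (fun n : ℕ => Multiset.replicate (n + 1) x) := by
    intro m n hmn
    have : m + 1 = n + 1 := by
      have := congrArg Multiset.card hmn
      simpa using this
    omega
  exact Set.infinite_range_of_injective hinj this

end FinitenessPaper
end

section
/- Every family (𝒜_i)_{i∈I} of finiteness spaces admits a least upper bound and a greatest lower bound for the finiteness inclusion order ⊑. Explicitly: the pair with web ⋃_i |𝒜_i| and structure (⋃_i F(𝒜_i))^⊥⊥ (predual taken on ⋃_i |𝒜_i|) is a finiteness space and is the ⊑-least upper bound, and the pair with web ⋂_i |𝒜_i| and structure ⋂_i F(𝒜_i) is a finiteness space and is the ⊑-greatest lower bound. Hence finiteness spaces form a complete lattice with respect to ⊑. -/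
open Set

namespace FinitenessPaper

lemma subset_bidual {α : Type*} {A : Set α} {F : Set (Set α)}
    (h : ∀ a ∈ F, a ⊆ A) : F ⊆ predual A (predual A F) := by
  intro a ha
  exact ⟨h a ha, fun b hb => by
    have := hb.2 a ha
    rwa [Set.inter_comm] at this⟩

lemma transfer {α : Type*} {A B : Set α} (hAB : A ⊆ B) {G H : Set (Set α)}
    (hGH : G ⊆ H) : predual A (predual A G) ⊆ predual B (predual B H) := by
  rintro a' ⟨ha'A, h⟩
  refine ⟨ha'A.trans hAB, fun b hb => ?_⟩
  have hbA : b ∩ A ∈ predual A G := by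
    refine ⟨inter_subset_right, fun a ha => ?_⟩
    exact (hb.2 a (hGH ha)).subset (inter_subset_inter_right a inter_subset_left)
  have hfin := h _ hbA
  exact hfin.subset fun x hx => ⟨⟨hx.1, ha'A hx.2⟩, hx.2⟩

lemma tridual {α : Type*} {A : Set α} (F : Set (Set α)) :
    predual A (predual A (predual A F)) = predual A F := by
  apply Subset.antisymm
  · rintro a' ⟨ha, h⟩
    refine ⟨ha, fun a haF => ?_⟩
    have hmem : a ∩ A ∈ predual A (predual A F) := by
      refine ⟨inter_subset_right, fun b hb => ?_⟩
      exact (hb.2 a haF).subset fun x hx => ⟨hx.2.1, hx.1⟩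
    have hfin := h _ hmem
    exact hfin.subset fun x hx => ⟨⟨hx.1, ha hx.2⟩, hx.2⟩
  · exact subset_bidual fun b hb => hb.1

lemma fin_subset_web_s9 {α : Type*} (X : FinSpace α) {a : Set α}
    (h : a ∈ X.fin) : a ⊆ X.web := by
  rw [← X.isFin] at h; exact h.1

/-- Every family of finiteness spaces admits a least upper bound (web the union
of the webs, structure the bidual of the union of the structures) and a greatest
lower bound (web the intersection of the webs, structure the intersection of the
structures) for the finiteness inclusion order `⊑` (web inclusion together with
structure inclusion); hence finiteness spaces form a complete lattice w.r.t. `⊑`. -/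
theorem fsSup_fsInf_lub_glb {α : Type*} {I : Type*} (A : I → FinSpace α) :
    let Wsup : Set α := ⋃ i, (A i).web
    let Fsup : Set (Set α) := predual Wsup (predual Wsup (⋃ i, (A i).fin))
    let Winf : Set α := ⋂ i, (A i).web
    let Finf : Set (Set α) := ⋂ i, (A i).fin
    -- the supremum is a finiteness space
    (predual Wsup (predual Wsup Fsup) = Fsup) ∧
    -- it is an upper bound for ⊑
    (∀ i, (A i).web ⊆ Wsup ∧ (A i).fin ⊆ Fsup) ∧
    -- and the least one
    (∀ C : FinSpace α, (∀ i, (A i).web ⊆ C.web ∧ (A i).fin ⊆ C.fin) →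
      Wsup ⊆ C.web ∧ Fsup ⊆ C.fin) ∧
    -- the infimum is a finiteness space
    (predual Winf (predual Winf Finf) = Finf) ∧
    -- it is a lower bound for ⊑
    (∀ i, Winf ⊆ (A i).web ∧ Finf ⊆ (A i).fin) ∧
    -- and the greatest one
    (∀ C : FinSpace α, (∀ i, C.web ⊆ (A i).web ∧ C.fin ⊆ (A i).fin) →
      C.web ⊆ Winf ∧ C.fin ⊆ Finf) := by
  intro Wsup Fsup Winf Finf
  refine ⟨?_, ?_, ?_, ?_, ?_, ?_⟩
  · -- sup is a finiteness space
    show predual Wsup (predual Wsup (predual Wsup (predual Wsup (⋃ i, (A i).fin)))) = _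
    rw [tridual]
  · -- upper bound
    intro i
    refine ⟨subset_iUnion (fun i => (A i).web) i, fun a ha => ?_⟩
    have : a ∈ predual (A i).web (predual (A i).web (A i).fin) := by
      rw [(A i).isFin]; exact ha
    exact transfer (subset_iUnion (fun i => (A i).web) i)
      (subset_iUnion (fun i => (A i).fin) i) this
  · -- least upper bound
    intro C hC
    refine ⟨iUnion_subset fun i => (hC i).1, fun a ha => ?_⟩
    rw [← C.isFin]
    exact transfer (iUnion_subset fun i => (hC i).1)
      (iUnion_subset fun i => (hC i).2) ha
  · -- inf is a finiteness space
    apply Subset.antisymm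
    · intro a' ha'
      refine mem_iInter.2 fun i => ?_
      rw [← (A i).isFin]
      exact transfer (iInter_subset (fun i => (A i).web) i)
        (iInter_subset (fun i => (A i).fin) i) ha'
    · exact subset_bidual fun a ha =>
        subset_iInter fun i => fin_subset_web_s9 (A i) (mem_iInter.1 ha i)
  · -- lower bound
    intro i
    exact ⟨iInter_subset (fun i => (A i).web) i, iInter_subset (fun i => (A i).fin) i⟩
  · -- greatest lower bound
    intro C hC
    exact ⟨subset_iInter fun i => (hC i).1, subset_iInter fun i => (hC i).2⟩

end FinitenessPaper
end

section
/- If (𝒜_n)_{n∈ℕ} is an extension sequence of finiteness spaces, i.e. 𝒜_n ≼ 𝒜_{n+1} for all n, then ⋃_{n∈ℕ} F(𝒜_n) is a finiteness structure on ⋃_{n∈ℕ} |𝒜_n|; that is, the ⊑-supremum ⊔_n 𝒜_n is exact. -/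
open Set

namespace FinitenessPaper

/-- Finiteness extension order: `A ≼ B` iff `|A| ⊆ |B|` and
`F(A) = F(B) ∩ 𝒫(|A|)`. -/
def fsExt {α : Type*} (A B : FinSpace α) : Prop :=
  A.web ⊆ B.web ∧ A.fin = {a ∈ B.fin | a ⊆ A.web}

section Aux

variable {α : Type*}

lemma mem_fin_subset_web {F : FinSpace α} {a : Set α} (ha : a ∈ F.fin) : a ⊆ F.web := by
  rw [← F.isFin] at ha; exact ha.1

lemma fin_downward {F : FinSpace α} {a b : Set α} (ha : a ∈ F.fin) (hba : b ⊆ a) :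
    b ∈ F.fin := by
  rw [← F.isFin] at ha ⊢
  exact ⟨hba.trans ha.1, fun c hc => ((ha.2 c hc).subset (inter_subset_inter_right c hba))⟩

variable (A : ℕ → FinSpace α) (hext : ∀ n, fsExt (A n) (A (n + 1)))

include hext

lemma web_mono {n m : ℕ} (h : n ≤ m) : (A n).web ⊆ (A m).web := by
  induction m, h using Nat.le_induction with
  | base => exact subset_rfl
  | succ m hm ih => exact ih.trans (hext m).1

lemma fin_mono {n m : ℕ} (h : n ≤ m) : (A n).fin ⊆ (A m).fin := by
  induction m, h using Nat.le_induction with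
  | base => exact subset_rfl
  | succ m hm ih =>
    refine ih.trans fun a ha => ?_
    rw [(hext m).2] at ha
    exact ha.1

lemma fin_restrict {n m : ℕ} (h : n ≤ m) {a : Set α} (ha : a ∈ (A m).fin)
    (hw : a ⊆ (A n).web) : a ∈ (A n).fin := by
  induction m, h using Nat.le_induction with
  | base => exact ha
  | succ m hm ih =>
    refine ih ?_
    rw [(hext m).2]
    exact ⟨ha, hw.trans (web_mono A hext hm)⟩

lemma finite_subset_web {s : Set α} (hs : s.Finite) (h : s ⊆ ⋃ n, (A n).web) :
    ∃ n, s ⊆ (A n).web := by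
  have : Finite s := hs.to_subtype
  choose f hf using fun x : s => mem_iUnion.1 (h x.2)
  obtain ⟨N, hN⟩ := Finite.exists_le f
  exact ⟨N, fun x hx => web_mono A hext (hN ⟨x, hx⟩) (hf ⟨x, hx⟩)⟩

end Aux

/-- If `(𝒜ₙ)` is an extension sequence (i.e. `𝒜ₙ ≼ 𝒜ₙ₊₁` for all `n`), then the
union of the finiteness structures is a finiteness structure on the union of the
webs: the `⊑`-supremum of the sequence is exact. -/
theorem extension_sequence_sup_exact {α : Type*} (A : ℕ → FinSpace α)
    (hext : ∀ n, fsExt (A n) (A (n + 1))) :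
    predual (⋃ n, (A n).web) (predual (⋃ n, (A n).web) (⋃ n, (A n).fin))
      = ⋃ n, (A n).fin := by
  apply Set.Subset.antisymm
  · rintro a ⟨haW, hfin⟩
    -- Step 1: the web of `a` is contained in some `(A n).web`.
    have hsub : ∃ n, a ⊆ (A n).web := by
      by_contra h
      push_neg at h
      have hne : ∀ n, (a \ (A n).web).Nonempty := fun n => diff_nonempty.2 (h n)
      choose x hx using hne
      have hra : range x ⊆ a := range_subset_iff.2 fun n => (hx n).1
      have ha' : range x ∈ predual (⋃ n, (A n).web) (⋃ n, (A n).fin) := by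
        refine ⟨hra.trans haW, fun c hc => ?_⟩
        obtain ⟨n, hc⟩ := mem_iUnion.1 hc
        have hsub' : c ∩ range x ⊆ x '' (Set.Iio n) := by
          rintro y ⟨hyc, k, rfl⟩
          refine ⟨k, ?_, rfl⟩
          by_contra hk
          exact (hx k).2 (web_mono A hext (le_of_not_gt hk) (mem_fin_subset_web hc hyc))
        exact ((Set.finite_Iio n).image x).subset hsub'
      have hfinx : (range x).Finite := by
        have h1 := hfin _ ha'
        rwa [inter_eq_left.2 hra] at h1
      obtain ⟨m, hm⟩ := finite_subset_web A hext hfinx (hra.trans haW)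
      exact (hx m).2 (hm (mem_range_self m))
    obtain ⟨n, hn⟩ := hsub
    refine mem_iUnion.2 ⟨n, ?_⟩
    rw [← (A n).isFin]
    refine ⟨hn, fun b hb => ?_⟩
    -- `b` is in the predual of `(A n).fin` on `(A n).web`; show it is in the big predual.
    refine hfin b ⟨hb.1.trans (subset_iUnion (fun k => (A k).web) n), fun c hc => ?_⟩
    obtain ⟨m, hc⟩ := mem_iUnion.1 hc
    have hd : c ∩ (A n).web ∈ (A n).fin := by
      have hmax : c ∈ (A (max n m)).fin := fin_mono A hext (le_max_right n m) hc
      exact fin_restrict A hext (le_max_left n m)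
        (fin_downward hmax inter_subset_left) inter_subset_right
    have h2 := hb.2 _ hd
    exact h2.subset fun y ⟨hyc, hyb⟩ => ⟨⟨hyc, hb.1 hyb⟩, hyb⟩
  · intro a ha
    obtain ⟨n, hn⟩ := mem_iUnion.1 ha
    refine ⟨(mem_fin_subset_web hn).trans (subset_iUnion (fun k => (A k).web) n),
      fun b hb => ?_⟩
    rw [inter_comm]
    exact hb.2 a ha
end FinitenessPaper
end

section
/- (Transport situation with shape yields a transport functor) Let T be a symmetric I-ary functor in Rel, (own_i)_{i∈I} an ownership relation on T, and shp a shape relation on (T, (own_i)). Then for all families (𝒜_i), (ℬ_i) of finiteness spaces and every family (f_i) with each f_i finitary from 𝒜_i to ℬ_i, the relation T((f_i)) is finitary from (T(|𝒜_i|)_i, 𝔗((𝒜_i),(own_i))) to (T(|ℬ_i|)_i, 𝔗((ℬ_i),(own_i))), where 𝔗((𝒜_i),(own_i)) = {â ⊆ T((|𝒜_i|)_i) : ∀i ∈ I, own_i[â] ∈ F(𝒜_i)}. -/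
open Set

namespace FinitenessPaper

/-- Composition of relations. -/
def rcomp {α β γ : Type*} (g : Set (β × γ)) (f : Set (α × β)) : Set (α × γ) :=
  {p | ∃ b, (p.1, b) ∈ f ∧ (b, p.2) ∈ g}

/-- Identity relation on a set. -/
def rid {α : Type*} (A : Set α) : Set (α × α) := {p | p.1 ∈ A ∧ p.1 = p.2}

lemma fin_downclosed {α : Type*} (X : FinSpace α) {a b : Set α}
    (hab : a ⊆ b) (hb : b ∈ X.fin) : a ∈ X.fin := by
  rw [← X.isFin] at hb ⊢
  exact ⟨hab.trans hb.1, fun c hc => ((hb.2 c hc).subset (inter_subset_inter_right c hab))⟩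

lemma rimage_finite {α β : Type*} (r : Set (α × β)) {c : Set α} (hc : c.Finite)
    (hq : ∀ x, (rimage r {x}).Finite) : (rimage r c).Finite := by
  have : rimage r c ⊆ ⋃ x ∈ c, rimage r {x} := by
    rintro y ⟨x, hx, hxy⟩
    exact mem_biUnion hx ⟨x, rfl, hxy⟩
  exact ((hc.biUnion fun x _ => hq x).subset this)

/-- A transport situation on a symmetric `I`-ary functor in Rel (given by its
action `Tobj` on families of sets and `Tmap` on families of relations), equipped
with an ownership relation `own` (a family of quasi-functional lax natural
transformations to the projections) and a shape relation `shp` (a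
quasi-functional lax natural transformation to a constant functor `E_S` such
that subsets with finitely many shapes and finite ownership images are finite),
defines a transport functor: the image `Tmap f` of any family of finitary
relations is finitary between the transported finiteness spaces. -/
theorem transport_situation_transport_functor
    {α β σ : Type*} {I : Type*}
    (Tobj : (I → Set α) → Set β)
    (Tmap : (I → Set (α × α)) → Set (β × β))
    (hT_sub : ∀ (A B : I → Set α) (f : I → Set (α × α)),
      (∀ i, f i ⊆ A i ×ˢ B i) → Tmap f ⊆ Tobj A ×ˢ Tobj B)
    (hT_id : ∀ A : I → Set α, Tmap (fun i => rid (A i)) = rid (Tobj A))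
    (hT_comp : ∀ f g : I → Set (α × α),
      Tmap (fun i => rcomp (g i) (f i)) = rcomp (Tmap g) (Tmap f))
    (hT_sym : ∀ f : I → Set (α × α), Tmap (fun i => rrev (f i)) = rrev (Tmap f))
    (own : I → (I → Set α) → Set (β × α))
    (hown_sub : ∀ i (A : I → Set α), own i A ⊆ Tobj A ×ˢ A i)
    (hown_qf : ∀ i (A : I → Set α) (x : β), (rimage (own i A) {x}).Finite)
    (hown_lax : ∀ i (A B : I → Set α) (g : I → Set (α × α)),
      (∀ j, g j ⊆ A j ×ˢ B j) →
      rcomp (own i B) (Tmap g) ⊆ rcomp (g i) (own i A))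
    (S : Set σ)
    (shp : (I → Set α) → Set (β × σ))
    (hshp_sub : ∀ A : I → Set α, shp A ⊆ Tobj A ×ˢ S)
    (hshp_qf : ∀ (A : I → Set α) (x : β), (rimage (shp A) {x}).Finite)
    (hshp_lax : ∀ (A B : I → Set α) (g : I → Set (α × α)),
      (∀ j, g j ⊆ A j ×ˢ B j) →
      rcomp (shp B) (Tmap g) ⊆ rcomp (rid S) (shp A))
    (hshp_fin : ∀ (A : I → Set α) (s : Set β), s ⊆ Tobj A →
      (rimage (shp A) s).Finite → (∀ i, (rimage (own i A) s).Finite) → s.Finite)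
    (𝒜 ℬ : I → FinSpace α) (f : I → Set (α × α))
    (hf_sub : ∀ i, f i ⊆ (𝒜 i).web ×ˢ (ℬ i).web)
    (hf : ∀ i, FinitaryRel (𝒜 i).web (𝒜 i).fin (ℬ i).web (ℬ i).fin (f i)) :
    FinitaryRel (Tobj fun i => (𝒜 i).web)
      {s | s ⊆ (Tobj fun i => (𝒜 i).web) ∧
        ∀ i, rimage (own i fun j => (𝒜 j).web) s ∈ (𝒜 i).fin}
      (Tobj fun i => (ℬ i).web)
      {s | s ⊆ (Tobj fun i => (ℬ i).web) ∧
        ∀ i, rimage (own i fun j => (ℬ j).web) s ∈ (ℬ i).fin}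
      (Tmap f) := by
  set Aw : I → Set α := fun i => (𝒜 i).web with hAw
  set Bw : I → Set α := fun i => (ℬ i).web with hBw
  have hTf_sub : Tmap f ⊆ Tobj Aw ×ˢ Tobj Bw := hT_sub Aw Bw f hf_sub
  have hrev_sub : ∀ j, rrev (f j) ⊆ Bw j ×ˢ Aw j := by
    rintro j ⟨y, x⟩ h
    exact ⟨(hf_sub j h).2, (hf_sub j h).1⟩
  constructor
  · -- forward direction
    rintro s ⟨hsub, hsfin⟩
    refine ⟨fun y ⟨x, _, hxy⟩ => (hTf_sub hxy).2, fun i => ?_⟩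
    refine fin_downclosed (ℬ i) (b := rimage (f i) (rimage (own i Aw) s)) ?_
      ((hf i).1 _ (hsfin i))
    rintro y ⟨z, ⟨x, hxs, hxz⟩, hzy⟩
    obtain ⟨w, hw1, hw2⟩ := hown_lax i Aw Bw f hf_sub
      (show (x, y) ∈ rcomp (own i Bw) (Tmap f) from ⟨z, hxz, hzy⟩)
    exact ⟨w, ⟨x, hxs, hw1⟩, hw2⟩
  · -- backward direction
    rintro b' ⟨hb'sub, hb'fin⟩
    refine ⟨fun x ⟨y, _, hxy⟩ => (hTf_sub hxy).1, ?_⟩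
    rintro s ⟨hssub, hsfin⟩
    set t := s ∩ rimage (rrev (Tmap f)) b' with ht
    -- c = b' ∩ Tmap f [s] is finite
    have himg : rimage (Tmap f) s ∈
        {s | s ⊆ Tobj Bw ∧ ∀ i, rimage (own i Bw) s ∈ (ℬ i).fin} := by
      refine ⟨fun y ⟨x, _, hxy⟩ => (hTf_sub hxy).2, fun i => ?_⟩
      refine fin_downclosed (ℬ i) (b := rimage (f i) (rimage (own i Aw) s)) ?_
        ((hf i).1 _ (hsfin i))
      rintro y ⟨z, ⟨x, hxs, hxz⟩, hzy⟩
      obtain ⟨w, hw1, hw2⟩ := hown_lax i Aw Bw f hf_sub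
        (show (x, y) ∈ rcomp (own i Bw) (Tmap f) from ⟨z, hxz, hzy⟩)
      exact ⟨w, ⟨x, hxs, hw1⟩, hw2⟩
    have hc : (rimage (Tmap f) s ∩ b').Finite := hb'fin _ himg
    set c := rimage (Tmap f) s ∩ b' with hcdef
    -- every x ∈ t is an image under rrev (Tmap f) of some y ∈ c
    have htc : ∀ x ∈ t, ∃ y ∈ c, (y, x) ∈ rrev (Tmap f) := by
      rintro x ⟨hxs, y, hyb', hxy⟩
      exact ⟨y, ⟨⟨x, hxs, hxy⟩, hyb'⟩, hxy⟩
    have hrevT : Tmap (fun i => rrev (f i)) = rrev (Tmap f) := hT_sym f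
    refine hshp_fin Aw t (fun x hx => hssub hx.1) ?_ ?_
    · -- shapes of t are finite
      have hsub : rimage (shp Aw) t ⊆ rimage (shp Bw) c := by
        rintro σ ⟨x, hxt, hxσ⟩
        obtain ⟨y, hyc, hyx⟩ := htc x hxt
        rw [← hrevT] at hyx
        obtain ⟨τ, hτ1, hτ2⟩ := hshp_lax Bw Aw (fun i => rrev (f i)) hrev_sub
          (show (y, σ) ∈ rcomp (shp Aw) (Tmap fun i => rrev (f i)) from ⟨x, hyx, hxσ⟩)
        have hts : τ = σ := hτ2.2
        exact ⟨y, hyc, hts ▸ hτ1⟩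
      exact (rimage_finite _ hc (hshp_qf Bw)).subset hsub
    · -- ownership images of t are finite
      intro i
      set d := rimage (own i Bw) c with hddef
      have hdfin : d.Finite := rimage_finite _ hc (hown_qf i Bw)
      have hdpre : d ∈ predual ((ℬ i).web) ((ℬ i).fin) := by
        refine ⟨fun y ⟨z, _, hzy⟩ => (hown_sub i Bw hzy).2, fun a _ => ?_⟩
        exact hdfin.subset (inter_subset_right)
      have hpre := (hf i).2 d hdpre
      have hsub : rimage (own i Aw) t ⊆
          rimage (own i Aw) s ∩ rimage (rrev (f i)) d := by
        rintro w ⟨x, hxt, hxw⟩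
        refine ⟨⟨x, hxt.1, hxw⟩, ?_⟩
        obtain ⟨y, hyc, hyx⟩ := htc x hxt
        rw [← hrevT] at hyx
        obtain ⟨v, hv1, hv2⟩ := hown_lax i Bw Aw (fun i => rrev (f i)) hrev_sub
          (show (y, w) ∈ rcomp (own i Aw) (Tmap fun i => rrev (f i)) from ⟨x, hyx, hxw⟩)
        exact ⟨v, ⟨y, hyc, hv1⟩, hv2⟩
      exact (hpre.2 _ (hsfin i)).subset hsub

end FinitenessPaper
end

section
/- Transport functors are monotonic for both finiteness extension and finiteness inclusion: let T be an I-ary functor in Rel with ownership relation (own_i)_{i∈I}, and for a family (𝒜_i) of finiteness spaces write T^own((𝒜_i)) = (T((|𝒜_i|)_i), {â ⊆ T((|𝒜_i|)_i) : ∀i, own_i[â] ∈ F(𝒜_i)}). If 𝒜_i ⊑ ℬ_i for all i ∈ I then T^own((𝒜_i)) ⊑ T^own((ℬ_i)), and if 𝒜_i ≼ ℬ_i for all i ∈ I then T^own((𝒜_i)) ≼ T^own((ℬ_i)). -/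
open Set

namespace FinitenessPaper

/-- Transport functors are monotonic for both finiteness inclusion `⊑` and
finiteness extension `≼`: given an `I`-ary functor in Rel with an ownership
relation, if `𝒜ᵢ ⊑ ℬᵢ` (resp. `𝒜ᵢ ≼ ℬᵢ`) for all `i`, then
`T^own(𝒜) ⊑ T^own(ℬ)` (resp. `T^own(𝒜) ≼ T^own(ℬ)`). -/
theorem transport_functor_monotone
    {α β : Type*} {I : Type*}
    (Tobj : (I → Set α) → Set β)
    (Tmap : (I → Set (α × α)) → Set (β × β))
    (hT_sub : ∀ (A B : I → Set α) (f : I → Set (α × α)),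
      (∀ i, f i ⊆ A i ×ˢ B i) → Tmap f ⊆ Tobj A ×ˢ Tobj B)
    (hT_id : ∀ A : I → Set α, Tmap (fun i => rid (A i)) = rid (Tobj A))
    (hT_comp : ∀ f g : I → Set (α × α),
      Tmap (fun i => rcomp (g i) (f i)) = rcomp (Tmap g) (Tmap f))
    (own : I → (I → Set α) → Set (β × α))
    (hown_sub : ∀ i (A : I → Set α), own i A ⊆ Tobj A ×ˢ A i)
    (hown_qf : ∀ i (A : I → Set α) (x : β), (rimage (own i A) {x}).Finite)
    (hown_lax : ∀ i (A B : I → Set α) (g : I → Set (α × α)),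
      (∀ j, g j ⊆ A j ×ˢ B j) →
      rcomp (own i B) (Tmap g) ⊆ rcomp (g i) (own i A))
    (𝒜 ℬ : I → FinSpace α) :
    let TA : Set β := Tobj fun i => (𝒜 i).web
    let TB : Set β := Tobj fun i => (ℬ i).web
    let FA : Set (Set β) :=
      {s | s ⊆ TA ∧ ∀ i, rimage (own i fun j => (𝒜 j).web) s ∈ (𝒜 i).fin}
    let FB : Set (Set β) :=
      {s | s ⊆ TB ∧ ∀ i, rimage (own i fun j => (ℬ j).web) s ∈ (ℬ i).fin}
    -- monotonicity for finiteness inclusion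
    ((∀ i, (𝒜 i).web ⊆ (ℬ i).web ∧ (𝒜 i).fin ⊆ (ℬ i).fin) →
      TA ⊆ TB ∧ FA ⊆ FB) ∧
    -- monotonicity for finiteness extension
    ((∀ i, (𝒜 i).web ⊆ (ℬ i).web ∧ (𝒜 i).fin = {a ∈ (ℬ i).fin | a ⊆ (𝒜 i).web}) →
      TA ⊆ TB ∧ FA = {s ∈ FB | s ⊆ TA}) := by
  intro TA TB FA FB
  -- key lemma: own agrees on elements of Tobj A when A ⊆ B pointwise
  have key : ∀ (A B : I → Set α), (∀ i, A i ⊆ B i) → ∀ i (x : β) (y : α),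
      x ∈ Tobj A → ((x, y) ∈ own i A ↔ (x, y) ∈ own i B) := by
    intro A B hAB i x y hx
    have hridAB : ∀ j, rid (A j) ⊆ A j ×ˢ B j := by
      intro j p hp; exact ⟨hp.1, hp.2 ▸ hAB j hp.1⟩
    have hridBA : ∀ j, rid (A j) ⊆ B j ×ˢ A j := by
      intro j p hp; exact ⟨hAB j hp.1, hp.2 ▸ hp.1⟩
    constructor
    · intro h
      have hlax := hown_lax i B A (fun j => rid (A j)) hridBA
      rw [hT_id] at hlax
      have : ((x, y) : β × α) ∈ rcomp (own i A) (rid (Tobj A)) :=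
        ⟨x, ⟨hx, rfl⟩, h⟩
      obtain ⟨b, hb1, hb2, he⟩ := hlax this
      have he' : b = y := he
      exact he' ▸ hb1
    · intro h
      have hlax := hown_lax i A B (fun j => rid (A j)) hridAB
      rw [hT_id] at hlax
      have : ((x, y) : β × α) ∈ rcomp (own i B) (rid (Tobj A)) :=
        ⟨x, ⟨hx, rfl⟩, h⟩
      obtain ⟨b, hb1, hb2, he⟩ := hlax this
      have he' : b = y := he
      exact he' ▸ hb1
  have keyim : ∀ (A B : I → Set α), (∀ i, A i ⊆ B i) → ∀ i (s : Set β),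
      s ⊆ Tobj A → rimage (own i A) s = rimage (own i B) s := by
    intro A B hAB i s hs
    ext y
    constructor
    · rintro ⟨x, hxs, hx⟩
      exact ⟨x, hxs, (key A B hAB i x y (hs hxs)).1 hx⟩
    · rintro ⟨x, hxs, hx⟩
      exact ⟨x, hxs, (key A B hAB i x y (hs hxs)).2 hx⟩
  have hTAB : ∀ (A B : I → Set α), (∀ i, A i ⊆ B i) → Tobj A ⊆ Tobj B := by
    intro A B hAB
    have hridAB : ∀ j, rid (A j) ⊆ A j ×ˢ B j := by
      intro j p hp; exact ⟨hp.1, hp.2 ▸ hAB j hp.1⟩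
    have h := hT_sub A B (fun j => rid (A j)) hridAB
    rw [hT_id] at h
    intro x hx
    exact (h (⟨hx, rfl⟩ : ((x, x) : β × β) ∈ rid (Tobj A))).2
  constructor
  · -- finiteness inclusion
    intro h
    have hweb : ∀ i, (𝒜 i).web ⊆ (ℬ i).web := fun i => (h i).1
    refine ⟨hTAB _ _ hweb, ?_⟩
    rintro s ⟨hsTA, hsfin⟩
    refine ⟨fun x hx => hTAB _ _ hweb (hsTA hx), fun i => ?_⟩
    rw [← keyim _ _ hweb i s hsTA]
    exact (h i).2 (hsfin i)
  · -- finiteness extension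
    intro h
    have hweb : ∀ i, (𝒜 i).web ⊆ (ℬ i).web := fun i => (h i).1
    refine ⟨hTAB _ _ hweb, ?_⟩
    ext s
    constructor
    · rintro ⟨hsTA, hsfin⟩
      refine ⟨⟨fun x hx => hTAB _ _ hweb (hsTA hx), fun i => ?_⟩, hsTA⟩
      rw [← keyim _ _ hweb i s hsTA]
      have := hsfin i
      rw [(h i).2] at this
      exact this.1
    · rintro ⟨⟨hsTB, hsfin⟩, hsTA⟩
      refine ⟨hsTA, fun i => ?_⟩
      rw [(h i).2]
      refine ⟨?_, ?_⟩
      · rw [keyim _ _ hweb i s hsTA]; exact hsfin i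
      · rintro y ⟨x, hxs, hx⟩
        exact (hown_sub i _ hx).2

end FinitenessPaper
end

section
/- Let 𝒜 and ℬ be finiteness spaces and f ⊆ M(|𝒜|) × |ℬ| a multirelation. Then f ∈ F(𝒜 ⇒ ℬ) if and only if for all a ∈ F(𝒜): f[a^!] ∈ F(ℬ), and for all β ∈ |ℬ|, f⁻¹[{β}] ∩ a^! is finite. -/
open Set

namespace FinitenessPaper

/-- The finiteness structure of the exponential `!`, given by web and structure. -/
def bangFinS {α : Type*} (W : Set α) (F : Set (Set α)) : Set (Set (Multiset α)) :=
  {s | s ⊆ bangSet W ∧ (⋃ μ ∈ s, {x : α | x ∈ μ}) ∈ F}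

/-- The finiteness structure of `𝒜 ⇒ ℬ = !𝒜 ⊸ ℬ = (!𝒜 ⊗ ℬ^⊥)^⊥`,
given by webs and structures. -/
def impFinS {α β : Type*} (Wa : Set α) (Fa : Set (Set α)) (Wb : Set β)
    (Fb : Set (Set β)) : Set (Set (Multiset α × β)) :=
  predual (bangSet Wa ×ˢ Wb)
    (tensFin (bangSet Wa) (bangFinS Wa Fa) Wb (predual Wb Fb))

/-- Characterization of finitary multirelations: `f ∈ F(𝒜 ⇒ ℬ)` iff for all
`a ∈ F(𝒜)`, `f[a^!] ∈ F(ℬ)` and, for all `β ∈ |ℬ|`, `f⁻¹[{β}] ∩ a^!` is finite. -/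
theorem finitary_multirelation_characterization {α β : Type*}
    (A : FinSpace α) (B : FinSpace β)
    (f : Set (Multiset α × β)) (hf : f ⊆ bangSet A.web ×ˢ B.web) :
    f ∈ impFinS A.web A.fin B.web B.fin ↔
      ∀ a ∈ A.fin, rimage f (bangSet a) ∈ B.fin ∧
        ∀ b ∈ B.web, (rimage (rrev f) {b} ∩ bangSet a).Finite := by
  constructor
  · rintro ⟨hsub, hfin⟩ a ha
    have haw : a ⊆ A.web := by
      rw [← A.isFin] at ha; exact ha.1
    have hbang : bangSet a ⊆ bangSet A.web := fun μ hμ x hx => haw (hμ x hx)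
    have hbne : (bangSet a).Nonempty :=
      ⟨0, fun x hx => absurd hx (Multiset.notMem_zero x)⟩
    have hbangmem : bangSet a ∈ bangFinS A.web A.fin := by
      refine ⟨hbang, ?_⟩
      have hU : (⋃ μ ∈ bangSet a, {x : α | x ∈ μ}) = a := by
        ext x
        simp only [mem_iUnion, mem_setOf_eq]
        constructor
        · rintro ⟨μ, hμ, hx⟩; exact hμ x hx
        · intro hx
          exact ⟨{x}, fun y hy => (Multiset.mem_singleton.mp hy) ▸ hx, by simp⟩
      rw [hU]; exact ha
    constructor
    · rw [← B.isFin]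
      refine ⟨?_, ?_⟩
      · rintro b ⟨μ, hμ, hmem⟩
        exact (hf hmem).2
      · intro b' hb'
        rcases b'.eq_empty_or_nonempty with rfl | hne
        · simp
        · have hc : bangSet a ×ˢ b' ∈
              tensFin (bangSet A.web) (bangFinS A.web A.fin) B.web (predual B.web B.fin) := by
          
            refine ⟨prod_mono hbang hb'.1, ?_, ?_⟩
            · rw [fst_image_prod _ hne]; exact hbangmem
            · rw [snd_image_prod hbne]; exact hb'
          have hcf := hfin _ hc
          refine (hcf.image Prod.snd).subset ?_
          rintro b ⟨hb1, μ, hμ, hmem⟩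
          exact ⟨(μ, b), ⟨⟨hμ, hb1⟩, hmem⟩, rfl⟩
    · intro b hb
      have hbmem : ({b} : Set β) ∈ predual B.web B.fin := by
        refine ⟨singleton_subset_iff.mpr hb, fun s _ => (finite_singleton b).subset inter_subset_right⟩
      have hc : bangSet a ×ˢ ({b} : Set β) ∈
          tensFin (bangSet A.web) (bangFinS A.web A.fin) B.web (predual B.web B.fin) := by
        refine ⟨prod_mono hbang (singleton_subset_iff.mpr hb), ?_, ?_⟩
        · rw [fst_image_prod _ (singleton_nonempty b)]; exact hbangmem
        · rw [snd_image_prod hbne]; exact hbmem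
      have hcf := hfin _ hc
      refine (hcf.image Prod.fst).subset ?_
      rintro μ ⟨⟨x, hx, hmem⟩, hμ⟩
      have hxb : x = b := hx
      subst hxb
      exact ⟨(μ, x), ⟨⟨hμ, rfl⟩, hmem⟩, rfl⟩
  · intro h
    refine ⟨hf, ?_⟩
    rintro c ⟨hcsub, ⟨hfw, hfa⟩, hsnd⟩
    set a := ⋃ μ ∈ Prod.fst '' c, {x : α | x ∈ μ} with ha_def
    obtain ⟨h1, h2⟩ := h a hfa
    have hS : (rimage f (bangSet a) ∩ Prod.snd '' c).Finite := hsnd.2 _ h1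
    have hkey : ∀ p ∈ c ∩ f, p.1 ∈ bangSet a := by
      rintro ⟨μ, b⟩ ⟨hpc, _⟩ x hx
      simp only [ha_def, mem_iUnion, mem_setOf_eq]
      exact ⟨μ, ⟨(μ, b), hpc, rfl⟩, hx⟩
    have hSw : ∀ b ∈ rimage f (bangSet a) ∩ Prod.snd '' c, b ∈ B.web := by
      rintro b ⟨⟨μ, hμ, hmem⟩, _⟩
      exact (hf hmem).2
    refine (hS.biUnion (fun b hb =>
      ((h2 b (hSw b hb)).image (fun μ => (μ, b))))).subset ?_
    rintro ⟨μ, b⟩ hp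
    have hμa : μ ∈ bangSet a := hkey _ hp
    obtain ⟨hpc, hpf⟩ := hp
    refine mem_biUnion (⟨⟨μ, hμa, hpf⟩, ⟨(μ, b), hpc, rfl⟩⟩ :
      b ∈ rimage f (bangSet a) ∩ Prod.snd '' c) ?_
    exact ⟨μ, ⟨⟨b, rfl, hpf⟩, hμa⟩, rfl⟩

end FinitenessPaper
end

section
/- The relational fixpoint operator is never finitary on non-empty webs: let 𝒜 be a finiteness space, set fix_0 = ∅ ⊆ M(M(|𝒜|) × |𝒜|) × |𝒜| and fix_{n+1} = {([([α_1,…,α_p], α)] + φ̄_1 + ⋯ + φ̄_p, α) : p ∈ ℕ, α, α_1, …, α_p ∈ |𝒜|, and (φ̄_k, α_k) ∈ fix_n for all 1 ≤ k ≤ p} (sums denoting multiset union), and fix = ⋃_{n∈ℕ} fix_n. If |𝒜| ≠ ∅, then fix ∉ F((𝒜 ⇒ 𝒜) ⇒ 𝒜). (In fact, for any α ∈ |𝒜|, the finitary multirelation f = {([], α), ([α], α)} ∈ F(𝒜 ⇒ 𝒜) satisfies: f^! ∩ fix⁻¹[{α}] is infinite.) -/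
open Set

namespace FinitenessPaper

/-- The approximants of the relational fixpoint operator on `𝒜`:
`fix₀ = ∅` and `fixₙ₊₁ = {([([α₁,…,α_p], α)] + φ̄₁ + ⋯ + φ̄_p, α) : (φ̄ₖ, αₖ) ∈ fixₙ}`. -/
def fixN {α : Type*} (A : FinSpace α) : ℕ → Set (Multiset (Multiset α × α) × α)
  | 0 => ∅
  | n + 1 =>
    {q | ∃ (a : α) (L : List (Multiset (Multiset α × α) × α)),
      a ∈ A.web ∧ (∀ p ∈ L, p ∈ fixN A n ∧ p.2 ∈ A.web) ∧
      q = (((((L.map Prod.snd : List α) : Multiset α), a) ::ₘ (L.map Prod.fst).sum), a)}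

/-- The relational fixpoint operator `fix = ⋃ₙ fixₙ`. -/
def fixRel {α : Type*} (A : FinSpace α) : Set (Multiset (Multiset α × α) × α) :=
  ⋃ n, fixN A n


/-- Witness multisets: `gWit a n = [([],a)] + n·[([a],a)]`. -/
def gWit {α : Type*} (a : α) (n : ℕ) : Multiset (Multiset α × α) :=
  ((0 : Multiset α), a) ::ₘ Multiset.replicate n (({a} : Multiset α), a)

lemma gWit_inj {α : Type*} (a : α) : Function.Injective (gWit a) := by
  intro m n h
  have : Multiset.card (gWit a m) = Multiset.card (gWit a n) := by rw [h]
  simpa [gWit] using this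

lemma gWit_bang {α : Type*} (a : α) (n : ℕ) :
    gWit a n ∈ bangSet ({((0 : Multiset α), a), (({a} : Multiset α), a)} : Set (Multiset α × α)) := by
  intro x hx
  simp only [gWit, Multiset.mem_cons] at hx
  rcases hx with h | h
  · left; exact h
  · right; exact Multiset.eq_of_mem_replicate h

lemma bang_union {α : Type*} (f : Set α) :
    (⋃ μ ∈ bangSet f, {x : α | x ∈ μ}) = f := by
  ext x
  simp only [mem_iUnion, mem_setOf_eq, bangSet]
  constructor
  · rintro ⟨μ, hμ, hx⟩; exact hμ x hx
  · intro hx; exact ⟨{x}, by simpa using hx, by simp⟩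

lemma gWit_mem {α : Type*} (A : FinSpace α) {a : α} (ha : a ∈ A.web) :
    ∀ n, (gWit a n, a) ∈ fixN A (n + 1) := by
  intro n
  induction n with
  | zero =>
    exact ⟨a, [], ha, by simp, by simp [gWit]⟩
  | succ n ih =>
    refine ⟨a, [(gWit a n, a)], ha, ?_, ?_⟩
    · intro p hp
      simp only [List.mem_singleton] at hp
      subst hp
      exact ⟨ih, ha⟩
    · simp [gWit, Multiset.replicate_succ, Multiset.cons_swap]

lemma gWit_mem_fixRel {α : Type*} (A : FinSpace α) {a : α} (ha : a ∈ A.web) (n : ℕ) :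
    (gWit a n, a) ∈ fixRel A :=
  mem_iUnion.2 ⟨n + 1, gWit_mem A ha n⟩

/-- The relational fixpoint operator is never finitary on non-empty webs:
if `|𝒜| ≠ ∅` then `fix ∉ F((𝒜 ⇒ 𝒜) ⇒ 𝒜)`; indeed for any `α ∈ |𝒜|` the finitary
multirelation `f = {([], α), ([α], α)} ∈ F(𝒜 ⇒ 𝒜)` satisfies that
`f^! ∩ fix⁻¹[{α}]` is infinite. -/
theorem fix_not_finitary {α : Type*} (A : FinSpace α) (hA : A.web.Nonempty) :
    fixRel A ∉
      impFinS (bangSet A.web ×ˢ A.web) (impFinS A.web A.fin A.web A.fin)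
        A.web A.fin ∧
    ∀ a ∈ A.web,
      ({((0 : Multiset α), a), (({a} : Multiset α), a)} : Set (Multiset α × α))
          ∈ impFinS A.web A.fin A.web A.fin ∧
      (bangSet ({((0 : Multiset α), a), (({a} : Multiset α), a)} : Set (Multiset α × α))
        ∩ rimage (rrev (fixRel A)) {a}).Infinite := by
  -- notation: for `a ∈ web`, `f a = {([],a), ([a],a)}`
  have hsub : ∀ a ∈ A.web,
      ({((0 : Multiset α), a), (({a} : Multiset α), a)} : Set (Multiset α × α))
        ⊆ bangSet A.web ×ˢ A.web := by
    rintro a ha x hx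
    rcases hx with h | h <;> subst h
    · exact ⟨fun y hy => by simp at hy, ha⟩
    · exact ⟨fun y hy => by simp at hy; subst hy; exact ha, ha⟩
  -- `f a` is finitary in `𝒜 ⇒ 𝒜` (it is finite)
  have hf : ∀ a ∈ A.web,
      ({((0 : Multiset α), a), (({a} : Multiset α), a)} : Set (Multiset α × α))
        ∈ impFinS A.web A.fin A.web A.fin := by
    intro a ha
    refine ⟨hsub a ha, fun c _ => ?_⟩
    exact Set.Finite.inter_of_right ((Set.finite_singleton _).insert _) c
  -- the intersection `(f a)^! ∩ fix⁻¹[{a}]` is infinite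
  have hinf : ∀ a ∈ A.web,
      (bangSet ({((0 : Multiset α), a), (({a} : Multiset α), a)} : Set (Multiset α × α))
        ∩ rimage (rrev (fixRel A)) {a}).Infinite := by
    intro a ha
    apply Set.infinite_of_injective_forall_mem (gWit_inj a)
    intro n
    exact ⟨gWit_bang a n, ⟨a, rfl, gWit_mem_fixRel A ha n⟩⟩
  refine ⟨?_, fun a ha => ⟨hf a ha, hinf a ha⟩⟩
  -- main statement: fix is not finitary
  rintro ⟨-, hfin⟩
  obtain ⟨a, ha⟩ := hA
  set f : Set (Multiset α × α) :=
    {((0 : Multiset α), a), (({a} : Multiset α), a)} with hfdef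
  have hbne : (bangSet f).Nonempty := ⟨0, fun y hy => by simp at hy⟩
  have hc : (bangSet f ×ˢ ({a} : Set α)) ∈
      tensFin (bangSet (bangSet A.web ×ˢ A.web))
        (bangFinS (bangSet A.web ×ˢ A.web) (impFinS A.web A.fin A.web A.fin))
        A.web (predual A.web A.fin) := by
    refine ⟨?_, ?_, ?_⟩
    · rintro ⟨μ, b⟩ ⟨hμ, hb⟩
      simp only [mem_singleton_iff] at hb
      exact ⟨fun x hx => hsub a ha (hμ x hx), hb ▸ ha⟩
    · rw [fst_image_prod _ (singleton_nonempty a)]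
      refine ⟨fun μ hμ x hx => hsub a ha (hμ x hx), ?_⟩
      rw [bang_union]
      exact hf a ha
    · rw [snd_image_prod hbne]
      exact ⟨singleton_subset_iff.2 ha,
        fun b _ => Set.Finite.inter_of_right (finite_singleton a) b⟩
  have hcont : ((bangSet f ×ˢ ({a} : Set α)) ∩ fixRel A).Infinite := by
    refine Set.infinite_of_injective_forall_mem
      (f := fun n => ((gWit a n, a) : Multiset (Multiset α × α) × α)) ?_ ?_
    · intro m n h
      exact gWit_inj a (congrArg Prod.fst h)
    · intro n
      exact ⟨⟨gWit_bang a n, rfl⟩, gWit_mem_fixRel A ha n⟩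
  exact hcont (hfin _ hc)

end FinitenessPaper
end
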